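/- Let E be a trace-preserving quantum operation on ℂ^d with Kraus decomposition E(ρ) = Σ_k E_k ρ E_k† where Σ_k E_k† E_k = I. Then the average fidelity ∫ ⟨ψ| E(|ψ⟩⟨ψ|) |ψ⟩ d|ψ⟩ over the Fubini–Study measure equals (Σ_k |tr E_k|² + d) / (d² + d). -/

import Mathlib

open MeasureTheory BigOperators

noncomputable section AvgFidelityAux

abbrev Es (d : ℕ) := EuclideanSpace ℂ (Fin d)

variable {d : ℕ}

lemma coord_le (x : Es d) (i : Fin d) : ‖x i‖ ≤ ‖x‖ := by
  have h2 : ‖x i‖^2 ≤ ‖x‖^2 := by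
    rw [EuclideanSpace.norm_eq, Real.sq_sqrt (by positivity)]
    exact Finset.single_le_sum (f := fun j => ‖x j‖^2) (fun j _ => by positivity) (Finset.mem_univ i)
  exact (pow_le_pow_iff_left₀ (norm_nonneg _) (norm_nonneg _) two_ne_zero).mp h2

/-! ### Unitaries -/

def phaseL (c : ℂ) (t : Fin d) : Es d →ₗ[ℂ] Es d where
  toFun ψ := WithLp.toLp 2 (fun s => if s = t then c * ψ s else ψ s)
  map_add' x y := by
    ext s
    show (if s = t then c * (x s + y s) else x s + y s) = _
    by_cases h : s = t <;> simp [h, mul_add]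
  map_smul' a x := by
    ext s
    show (if s = t then c * (a * x s) else a * x s) = _
    by_cases h : s = t <;> simp [h] <;> ring

lemma phaseL_apply (c : ℂ) (t : Fin d) (ψ : Es d) (s : Fin d) :
    phaseL c t ψ s = if s = t then c * ψ s else ψ s := rfl

def phaseU (c : ℂ) (hc : ‖c‖ = 1) (t : Fin d) : Es d ≃ₗᵢ[ℂ] Es d := by
  have hcc : (starRingEnd ℂ) c * c = 1 := by
    rw [Complex.conj_mul', hc]; norm_num
  refine LinearEquiv.isometryOfInner
    (LinearEquiv.ofLinear (phaseL c t) (phaseL (starRingEnd ℂ c) t) ?_ ?_) ?_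
  · apply LinearMap.ext; intro ψ; ext s
    show phaseL c t (phaseL _ t ψ) s = ψ s
    simp only [phaseL_apply]
    by_cases h : s = t <;> simp [h]
    linear_combination ψ t * hcc
  · apply LinearMap.ext; intro ψ; ext s
    show phaseL _ t (phaseL c t ψ) s = ψ s
    simp only [phaseL_apply]
    by_cases h : s = t <;> simp [h]
    linear_combination ψ t * hcc
  · intro x y
    simp only [LinearEquiv.ofLinear_apply, PiLp.inner_apply, RCLike.inner_apply, phaseL_apply]
    apply Finset.sum_congr rfl
    intro s _
    by_cases h : s = t <;> simp [h]
    linear_combination ((starRingEnd ℂ) (x t) * y t) * hcc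

lemma phaseU_apply (c : ℂ) (hc : ‖c‖ = 1) (t : Fin d) (ψ : Es d) (s : Fin d) :
    phaseU c hc t ψ s = if s = t then c * ψ s else ψ s := rfl

def rt2 : ℂ := ((Real.sqrt 2 : ℝ) : ℂ)⁻¹

lemma rt2_conj : (starRingEnd ℂ) rt2 = rt2 := by simp [rt2]

lemma rt2_sq : rt2 * rt2 = (2 : ℂ)⁻¹ := by
  rw [rt2, ← mul_inv, ← Complex.ofReal_mul, Real.mul_self_sqrt (by norm_num)]
  norm_num

def hadL (u v : Fin d) : Es d →ₗ[ℂ] Es d where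
  toFun ψ := WithLp.toLp 2 (fun s => if s = u then (ψ u + ψ v) * rt2 else
    if s = v then (ψ u - ψ v) * rt2 else ψ s)
  map_add' x y := by
    ext s
    show (if s = u then ((x+y) u + (x+y) v) * rt2 else if s = v then ((x+y) u - (x+y) v) * rt2 else (x+y) s) = _
    simp only [PiLp.add_apply]
    split_ifs <;> ring
  map_smul' a x := by
    ext s
    show (if s = u then ((a•x) u + (a•x) v) * rt2 else if s = v then ((a•x) u - (a•x) v) * rt2 else (a•x) s) = _
    simp only [PiLp.smul_apply, smul_eq_mul, RingHom.id_apply]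
    split_ifs <;> ring

lemma hadL_apply (u v : Fin d) (ψ : Es d) (s : Fin d) :
    hadL u v ψ s = if s = u then (ψ u + ψ v) * rt2 else
      if s = v then (ψ u - ψ v) * rt2 else ψ s := rfl

lemma hadL_invol (u v : Fin d) (huv : u ≠ v) (ψ : Es d) : hadL u v (hadL u v ψ) = ψ := by
  ext s
  by_cases h : s = u
  · subst h
    simp only [hadL_apply, eq_self_iff_true, if_true, if_neg huv, if_neg (Ne.symm huv)]
    linear_combination 2 * ψ s * rt2_sq
  · by_cases h' : s = v
    · subst h'
      simp only [hadL_apply, eq_self_iff_true, if_true, if_neg huv, if_neg (Ne.symm huv), if_neg h]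
      linear_combination 2 * ψ s * rt2_sq
    · simp [hadL_apply, h, h']

def hadU (u v : Fin d) (huv : u ≠ v) : Es d ≃ₗᵢ[ℂ] Es d := by
  refine LinearEquiv.isometryOfInner
    (LinearEquiv.ofLinear (hadL u v) (hadL u v)
      (LinearMap.ext fun ψ => hadL_invol u v huv ψ)
      (LinearMap.ext fun ψ => hadL_invol u v huv ψ)) ?_
  intro x y
  simp only [LinearEquiv.ofLinear_apply, PiLp.inner_apply, RCLike.inner_apply]
  rw [← sub_eq_zero, ← Finset.sum_sub_distrib]
  rw [← Finset.sum_subset (Finset.subset_univ ({u, v} : Finset (Fin d)))]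
  · rw [Finset.sum_insert (by simp [huv]), Finset.sum_singleton]
    simp only [hadL_apply, eq_self_iff_true, if_true, if_neg huv, if_neg (Ne.symm huv)]
    rw [map_mul, map_mul, map_add, map_sub, rt2_conj]
    linear_combination 2 * ((starRingEnd ℂ) (x u) * y u + (starRingEnd ℂ) (x v) * y v) * rt2_sq
  · intro s _ hs
    simp only [Finset.mem_insert, Finset.mem_singleton, not_or] at hs
    simp [hadL_apply, hs.1, hs.2]

lemma hadU_apply (u v : Fin d) (huv : u ≠ v) (ψ : Es d) (s : Fin d) :
    hadU u v huv ψ s = if s = u then (ψ u + ψ v) * rt2 else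
      if s = v then (ψ u - ψ v) * rt2 else ψ s := rfl

/-! ### Monomials -/

def mono (i j k l : Fin d) (ψ : Es d) : ℂ :=
  ψ i * (starRingEnd ℂ) (ψ j) * (ψ k * (starRingEnd ℂ) (ψ l))

lemma continuous_coord (i : Fin d) : Continuous (fun ψ : Es d => ψ i) :=
  (continuous_apply i).comp (PiLp.continuous_ofLp 2 _)

lemma continuous_conj_coord (s : Fin d) : Continuous fun ψ : Es d => (starRingEnd ℂ) (ψ s) :=
  Complex.continuous_conj.comp (continuous_coord s)

lemma continuous_mono (i j k l : Fin d) : Continuous (mono (d := d) i j k l) :=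
  ((continuous_coord i).mul (continuous_conj_coord j)).mul
    ((continuous_coord k).mul (continuous_conj_coord l))

variable [MeasurableSpace (Es d)] [BorelSpace (Es d)]
variable (μ : Measure (Es d)) [IsProbabilityMeasure μ]

lemma integrable_mono (hsphere : ∀ᵐ ψ ∂μ, ‖ψ‖ = 1) (i j k l : Fin d) :
    Integrable (mono i j k l) μ := by
  refine Integrable.mono' (integrable_const 1) ((continuous_mono i j k l).aestronglyMeasurable) ?_
  filter_upwards [hsphere] with ψ hψ
  have hb : ∀ s : Fin d, ‖ψ s‖ ≤ 1 := fun s => (coord_le ψ s).trans_eq hψ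
  calc ‖mono i j k l ψ‖ = ‖ψ i‖ * ‖ψ j‖ * (‖ψ k‖ * ‖ψ l‖) := by
        simp [mono]
    _ ≤ 1 * 1 * (1 * 1) := by gcongr <;> first | exact hb _ | positivity
    _ = 1 := by norm_num

def mom (i j k l : Fin d) : ℂ := ∫ ψ, mono i j k l ψ ∂μ

lemma int_comp (hinv : ∀ U : Es d ≃ₗᵢ[ℂ] Es d, μ.map U = μ)
    (U : Es d ≃ₗᵢ[ℂ] Es d) (f : Es d → ℂ) (hf : AEStronglyMeasurable f μ) :
    ∫ ψ, f (U ψ) ∂μ = ∫ ψ, f ψ ∂μ := by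
  have hm : AEMeasurable (U : Es d → Es d) μ := U.continuous.measurable.aemeasurable
  have hf' : AEStronglyMeasurable f (μ.map U) := by rw [hinv U]; exact hf
  rw [← integral_map hm hf', hinv U]


lemma mom_phase (hinv : ∀ U : Es d ≃ₗᵢ[ℂ] Es d, μ.map U = μ)
    (i j k l t : Fin d) (c : ℂ) (hc : ‖c‖ = 1) :
    mom μ i j k l = (if i = t then c else 1) * (starRingEnd ℂ) (if j = t then c else 1) *
      ((if k = t then c else 1) * (starRingEnd ℂ) (if l = t then c else 1)) * mom μ i j k l := by
  have hpt : ∀ ψ : Es d, mono i j k l (phaseU c hc t ψ)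
      = (if i = t then c else 1) * (starRingEnd ℂ) (if j = t then c else 1) *
        ((if k = t then c else 1) * (starRingEnd ℂ) (if l = t then c else 1)) * mono i j k l ψ := by
    intro ψ
    simp only [mono, phaseU_apply]
    split_ifs <;> simp [map_mul] <;> ring
  conv_lhs => rw [mom, ← int_comp μ hinv (phaseU c hc t) _ (continuous_mono i j k l).aestronglyMeasurable]
  simp only [hpt]
  rw [integral_const_mul]
  rfl

lemma cancel_helper {z w : ℂ} (h : w = z * w) (hz : z ≠ 1) : w = 0 := by
  have h1 : (1 - z) * w = 0 := by linear_combination h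
  rcases mul_eq_zero.mp h1 with h' | h'
  · exact absurd (sub_eq_zero.mp h').symm hz
  · exact h'

lemma mom_zero (hinv : ∀ U : Es d ≃ₗᵢ[ℂ] Es d, μ.map U = μ)
    (i j k l t : Fin d)
    (hcount : ((if i = t then 1 else 0) + (if k = t then 1 else 0) : ℤ)
      ≠ (if j = t then 1 else 0) + (if l = t then 1 else 0)) :
    mom μ i j k l = 0 := by
  have heq := mom_phase μ hinv i j k l t Complex.I (by simp)
  by_cases h1 : i = t <;> by_cases h2 : j = t <;> by_cases h3 : k = t <;> by_cases h4 : l = t <;>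
    simp only [h1, h2, h3, h4, if_true, if_false, if_pos, if_neg, eq_self_iff_true,
      not_false_iff, map_one, Complex.conj_I, one_mul, mul_one] at heq hcount ⊢ <;>
    first
      | exact absurd rfl hcount
      | exact cancel_helper heq (by norm_num [Complex.ext_iff])

-- pattern lemma, pure combinatorics
lemma pattern_of_counts {i j k l : Fin d}
    (h : ∀ t : Fin d, ((if i = t then 1 else 0) + (if k = t then 1 else 0) : ℤ)
      = (if j = t then 1 else 0) + (if l = t then 1 else 0)) :
    (i = j ∧ k = l) ∨ (i = l ∧ k = j) := by
  by_cases hij : i = j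
  · left
    refine ⟨hij, ?_⟩
    subst hij
    have hk := h k
    by_cases hik : i = k <;> by_cases hlk : l = k <;> simp [hik, hlk] at hk ⊢ <;> omega
  · right
    have hi := h i
    have hji : ¬ j = i := fun hh => hij hh.symm
    simp only [if_pos rfl, if_neg hji] at hi
    have hli : l = i := by
      by_cases hki : k = i <;> by_cases hli : l = i <;> simp [hki, hli] at hi <;> first | rfl | omega
    have hki : ¬ k = i := by
      intro hki
      simp [hki, hli] at hi
    have hk := h k
    have hik : ¬ i = k := fun hh => hki hh.symm
    have hlk : ¬ l = k := fun hh => hki (hli ▸ hh).symm -- l = i so l=k → i=k? careful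
    simp only [if_neg hik, if_pos rfl, if_neg hlk] at hk
    have hjk : j = k := by
      by_cases hjk : j = k
      · exact hjk
      · simp [hjk] at hk
    exact ⟨hli.symm, hjk.symm⟩


lemma mom_perm (hinv : ∀ U : Es d ≃ₗᵢ[ℂ] Es d, μ.map U = μ)
    (σ : Equiv.Perm (Fin d)) (i j k l : Fin d) :
    mom μ (σ i) (σ j) (σ k) (σ l) = mom μ i j k l := by
  have happ : ∀ (ψ : Es d) (s : Fin d),
      (LinearIsometryEquiv.piLpCongrLeft 2 ℂ ℂ σ.symm : Es d ≃ₗᵢ[ℂ] Es d) ψ s = ψ (σ s) := by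
    intro ψ s
    rw [LinearIsometryEquiv.piLpCongrLeft_apply]
    rfl
  rw [mom, mom, ← int_comp μ hinv (LinearIsometryEquiv.piLpCongrLeft 2 ℂ ℂ σ.symm) _
    (continuous_mono i j k l).aestronglyMeasurable]
  apply integral_congr_ae
  filter_upwards with ψ
  simp only [mono, happ]

lemma mom_diag (hinv : ∀ U : Es d ≃ₗᵢ[ℂ] Es d, μ.map U = μ) (u i : Fin d) :
    mom μ i i i i = mom μ u u u u := by
  have h := mom_perm μ hinv (Equiv.swap u i) u u u u
  rwa [Equiv.swap_apply_left] at h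

lemma mom_cross_zero (hinv : ∀ U : Es d ≃ₗᵢ[ℂ] Es d, μ.map U = μ)
    {i k : Fin d} (hik : i ≠ k) : mom μ i k i k = 0 := by
  apply mom_zero μ hinv i k i k i
  simp [Ne.symm hik]

lemma mom_offdiag (hsphere : ∀ᵐ ψ ∂μ, ‖ψ‖ = 1)
    (hinv : ∀ U : Es d ≃ₗᵢ[ℂ] Es d, μ.map U = μ)
    {i k : Fin d} (hik : i ≠ k) :
    mom μ i i k k = mom μ i i i i * 2⁻¹ := by
  have hpt : ∀ ψ : Es d, mono i i k k (hadU i k hik ψ)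
      = (4 : ℂ)⁻¹ * (mono i i i i ψ + mono k k k k ψ - mono i k i k ψ - mono k i k i ψ) := by
    intro ψ
    have h4 : rt2 * rt2 * (rt2 * rt2) = (4 : ℂ)⁻¹ := by
      rw [rt2_sq]; norm_num
    simp only [mono, hadU_apply, eq_self_iff_true, if_true, if_neg hik, if_neg (Ne.symm hik)]
    rw [map_mul, map_mul, map_add, map_sub, rt2_conj]
    linear_combination ((ψ i + ψ k) * ((starRingEnd ℂ) (ψ i) + (starRingEnd ℂ) (ψ k)) *
      ((ψ i - ψ k) * ((starRingEnd ℂ) (ψ i) - (starRingEnd ℂ) (ψ k)))) * h4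
  have hstep : mom μ i i k k = (4 : ℂ)⁻¹ *
      (mom μ i i i i + mom μ k k k k - mom μ i k i k - mom μ k i k i) := by
    rw [mom, ← int_comp μ hinv (hadU i k hik) _ (continuous_mono i i k k).aestronglyMeasurable]
    simp only [hpt]
    rw [integral_const_mul]
    congr 1
    rw [integral_sub (f := fun a => mono i i i i a + mono k k k k a - mono i k i k a)
        (g := fun a => mono k i k i a)
        (((integrable_mono μ hsphere i i i i).add (integrable_mono μ hsphere k k k k)).sub
          (integrable_mono μ hsphere i k i k)) (integrable_mono μ hsphere k i k i),
      integral_sub (f := fun a => mono i i i i a + mono k k k k a)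
        (g := fun a => mono i k i k a)
        ((integrable_mono μ hsphere i i i i).add (integrable_mono μ hsphere k k k k))
        (integrable_mono μ hsphere i k i k),
      integral_add (f := fun a => mono i i i i a) (g := fun a => mono k k k k a)
        (integrable_mono μ hsphere i i i i) (integrable_mono μ hsphere k k k k)]
    rfl
  rw [hstep, mom_cross_zero μ hinv hik, mom_cross_zero μ hinv (Ne.symm hik),
    mom_diag μ hinv i k]
  ring

lemma mom_sum_one (hsphere : ∀ᵐ ψ ∂μ, ‖ψ‖ = 1) :
    ∑ i : Fin d, ∑ k : Fin d, mom μ i i k k = 1 := by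
  have h1 : ∑ i : Fin d, ∑ k : Fin d, mom μ i i k k
      = ∫ ψ, ∑ i : Fin d, ∑ k : Fin d, mono i i k k ψ ∂μ := by
    rw [integral_finset_sum _ (fun i _ =>
      integrable_finset_sum _ (fun k _ => integrable_mono μ hsphere i i k k))]
    exact Finset.sum_congr rfl fun i _ =>
      (integral_finset_sum _ (fun k _ => integrable_mono μ hsphere i i k k)).symm
  rw [h1]
  have h2 : ∀ᵐ ψ ∂μ, (∑ i : Fin d, ∑ k : Fin d, mono i i k k ψ) = (1 : ℂ) := by
    filter_upwards [hsphere] with ψ hψ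
    have hin : (∑ s : Fin d, (starRingEnd ℂ) (ψ s) * ψ s) = 1 := by
      have h : (inner ℂ ψ ψ : ℂ) = ((1 : ℝ) : ℂ) ^ 2 := by
        rw [inner_self_eq_norm_sq_to_K (𝕜 := ℂ), hψ]
        norm_num
      simp only [PiLp.inner_apply, RCLike.inner_apply'] at h
      rw [h]
      norm_num
    calc (∑ i : Fin d, ∑ k : Fin d, mono i i k k ψ)
        = (∑ i : Fin d, (starRingEnd ℂ) (ψ i) * ψ i) * (∑ k : Fin d, (starRingEnd ℂ) (ψ k) * ψ k) := by
          rw [Finset.sum_mul_sum]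
          exact Finset.sum_congr rfl fun i _ => Finset.sum_congr rfl fun k _ => by
            simp only [mono]; ring
      _ = 1 := by rw [hin, one_mul]
  rw [integral_congr_ae h2]
  simp

lemma mom_diag_val (hd : 0 < d) (hsphere : ∀ᵐ ψ ∂μ, ‖ψ‖ = 1)
    (hinv : ∀ U : Es d ≃ₗᵢ[ℂ] Es d, μ.map U = μ) (u : Fin d) :
    mom μ u u u u = 2 * ((d : ℂ)^2 + d)⁻¹ := by
  set A := mom μ u u u u with hA
  have hsum := mom_sum_one μ hsphere
  have hinner : ∀ i : Fin d, ∑ k : Fin d, mom μ i i k k = A + ((d : ℂ) - 1) * (A * 2⁻¹) := by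
    intro i
    rw [← Finset.add_sum_erase _ _ (Finset.mem_univ i)]
    congr 1
    · exact mom_diag μ hinv u i
    · rw [Finset.sum_congr rfl (fun k hk => ?_), Finset.sum_const,
        Finset.card_erase_of_mem (Finset.mem_univ i), Finset.card_univ, Fintype.card_fin,
        nsmul_eq_mul]
      · congr 1
        rw [Nat.cast_sub hd, Nat.cast_one]
      · rw [mom_offdiag μ hsphere hinv (Ne.symm (Finset.mem_erase.mp hk).1), mom_diag μ hinv u i]
  rw [Finset.sum_congr rfl (fun i _ => hinner i), Finset.sum_const, Finset.card_univ,
    Fintype.card_fin, nsmul_eq_mul] at hsum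
  have hd0 : (d : ℂ) ≠ 0 := Nat.cast_ne_zero.mpr hd.ne'
  have hd1 : (d : ℂ) + 1 ≠ 0 := by
    intro h
    have : ((d + 1 : ℕ) : ℂ) = 0 := by push_cast; linear_combination h
    exact (Nat.cast_ne_zero.mpr (Nat.succ_ne_zero d)) this
  have hdd : (d : ℂ)^2 + d ≠ 0 := by
    intro h
    apply hd1
    have := mul_eq_zero.mp (show (d : ℂ) * ((d : ℂ) + 1) = 0 by linear_combination h)
    rcases this with h' | h'
    · exact absurd h' hd0
    · exact h'
  have hmul : A * ((d : ℂ)^2 + d) = 2 := by linear_combination 2 * hsum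
  calc A = A * (((d : ℂ)^2 + d) * ((d : ℂ)^2 + d)⁻¹) := by
        rw [mul_inv_cancel₀ hdd, mul_one]
    _ = 2 * ((d : ℂ)^2 + d)⁻¹ := by rw [← mul_assoc, hmul]

lemma keyMoment (hd : 0 < d) (hsphere : ∀ᵐ ψ ∂μ, ‖ψ‖ = 1)
    (hinv : ∀ U : Es d ≃ₗᵢ[ℂ] Es d, μ.map U = μ) (i j k l : Fin d) :
    mom μ i j k l = ((if i = j then 1 else 0) * (if k = l then 1 else 0)
      + (if i = l then 1 else 0) * (if k = j then 1 else 0) : ℂ) * ((d : ℂ)^2 + d)⁻¹ := by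
  by_cases hpat : (i = j ∧ k = l) ∨ (i = l ∧ k = j)
  · rcases hpat with ⟨hij, hkl⟩ | ⟨hil, hkj⟩
    · subst hij; subst hkl
      by_cases hik : i = k
      · subst hik
        simp only [eq_self_iff_true, if_true]
        rw [mom_diag_val μ hd hsphere hinv i]
        ring
      · simp only [eq_self_iff_true, if_true, if_neg hik, if_neg (Ne.symm hik)]
        rw [mom_offdiag μ hsphere hinv hik, mom_diag_val μ hd hsphere hinv i]
        ring
    · subst hil; subst hkj
      by_cases hik : i = k
      · subst hik
        simp only [eq_self_iff_true, if_true]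
        rw [mom_diag_val μ hd hsphere hinv i]
        ring
      · have hswap : mom μ i k k i = mom μ i i k k := by
          rw [mom, mom]
          apply integral_congr_ae
          filter_upwards with ψ
          simp only [mono]; ring
        simp only [eq_self_iff_true, if_true, if_neg hik, if_neg (Ne.symm hik)]
        rw [hswap, mom_offdiag μ hsphere hinv hik, mom_diag_val μ hd hsphere hinv i]
        ring
  · have hex : ¬ ∀ t : Fin d, ((if i = t then 1 else 0) + (if k = t then 1 else 0) : ℤ)
        = (if j = t then 1 else 0) + (if l = t then 1 else 0) :=
      fun hall => hpat (pattern_of_counts hall)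
    push_neg at hex
    obtain ⟨t, ht⟩ := hex
    rw [mom_zero μ hinv i j k l t ht]
    have h1 : ¬(i = j ∧ k = l) := fun h => hpat (Or.inl h)
    have h2 : ¬(i = l ∧ k = j) := fun h => hpat (Or.inr h)
    rcases not_and_or.mp h1 with h | h <;> rcases not_and_or.mp h2 with h' | h' <;>
      simp [h, h']


lemma trace_eq_sum (T : EuclideanSpace ℂ (Fin d) →ₗ[ℂ] EuclideanSpace ℂ (Fin d)) :
    LinearMap.trace ℂ (EuclideanSpace ℂ (Fin d)) T
      = ∑ i, (T (EuclideanSpace.single i 1)) i := by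
  rw [LinearMap.trace_eq_matrix_trace ℂ ((EuclideanSpace.basisFun (Fin d) ℂ).toBasis)]
  rw [Matrix.trace]
  apply Finset.sum_congr rfl
  intro i _
  rw [Matrix.diag_apply, LinearMap.toMatrix_apply,
    OrthonormalBasis.coe_toBasis_repr_apply, OrthonormalBasis.coe_toBasis,
    EuclideanSpace.basisFun_apply, EuclideanSpace.basisFun_repr]

lemma repr_sum (ψ : EuclideanSpace ℂ (Fin d)) :
    ψ = ∑ i, ψ i • EuclideanSpace.single i (1 : ℂ) := by
  ext s
  rw [show ((∑ i, ψ i • EuclideanSpace.single i (1 : ℂ)) s) = ∑ i, (ψ i • EuclideanSpace.single i (1:ℂ)) s from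
    by rw [WithLp.ofLp_sum]; exact Finset.sum_apply s Finset.univ _]
  simp [EuclideanSpace.single_apply]

lemma apply_coord (T : EuclideanSpace ℂ (Fin d) →ₗ[ℂ] EuclideanSpace ℂ (Fin d))
    (ψ : EuclideanSpace ℂ (Fin d)) (j : Fin d) :
    (T ψ) j = ∑ i, ψ i * (T (EuclideanSpace.single i 1)) j := by
  conv_lhs => rw [repr_sum ψ, map_sum]
  rw [show ((∑ i, T (ψ i • EuclideanSpace.single i (1:ℂ))) j) = ∑ i, (T (ψ i • EuclideanSpace.single i (1:ℂ))) j from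
    by rw [WithLp.ofLp_sum]; exact Finset.sum_apply j Finset.univ _]
  apply Finset.sum_congr rfl
  intro i _
  rw [_root_.map_smul]
  rfl

lemma helper (f : Fin d → ℂ) (t : Fin d) : (∑ s, f s * (if t = s then (1:ℂ) else 0)) = f t := by
  simp

lemma helper' (f : Fin d → ℂ) (t : Fin d) : (∑ s, f s * (if s = t then (1:ℂ) else 0)) = f t := by
  simp

lemma collapse1 (A : Fin d → Fin d → ℂ) :
    (∑ j, ∑ j', ∑ i, ∑ i', (A j i * (starRingEnd ℂ) (A j' i')) *
      ((if i = j then (1:ℂ) else 0) * (if j' = i' then 1 else 0)))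
    = (∑ j, A j j) * (starRingEnd ℂ) (∑ j', A j' j') := by
  calc (∑ j, ∑ j', ∑ i, ∑ i', (A j i * (starRingEnd ℂ) (A j' i')) *
      ((if i = j then (1:ℂ) else 0) * (if j' = i' then 1 else 0)))
      = ∑ j, ∑ j', ∑ i, (A j i * (starRingEnd ℂ) (A j' j')) * (if i = j then (1:ℂ) else 0) := by
        refine Finset.sum_congr rfl fun j _ => Finset.sum_congr rfl fun j' _ =>
          Finset.sum_congr rfl fun i _ => ?_
        rw [← helper (fun i' => A j i * (starRingEnd ℂ) (A j' i') * (if i = j then (1:ℂ) else 0)) j']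
        exact Finset.sum_congr rfl fun i' _ => by ring
    _ = ∑ j, ∑ j', A j j * (starRingEnd ℂ) (A j' j') := by
        refine Finset.sum_congr rfl fun j _ => Finset.sum_congr rfl fun j' _ => ?_
        exact helper' (fun i => A j i * (starRingEnd ℂ) (A j' j')) j
    _ = (∑ j, A j j) * (starRingEnd ℂ) (∑ j', A j' j') := by
        rw [map_sum, Finset.sum_mul_sum]

lemma collapse2 (A : Fin d → Fin d → ℂ) :
    (∑ j, ∑ j', ∑ i, ∑ i', (A j i * (starRingEnd ℂ) (A j' i')) *
      ((if i = i' then (1:ℂ) else 0) * (if j' = j then 1 else 0)))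
    = ∑ j, ∑ i, A j i * (starRingEnd ℂ) (A j i) := by
  calc (∑ j, ∑ j', ∑ i, ∑ i', (A j i * (starRingEnd ℂ) (A j' i')) *
      ((if i = i' then (1:ℂ) else 0) * (if j' = j then 1 else 0)))
      = ∑ j, ∑ j', ∑ i, (A j i * (starRingEnd ℂ) (A j' i)) * (if j' = j then (1:ℂ) else 0) := by
        refine Finset.sum_congr rfl fun j _ => Finset.sum_congr rfl fun j' _ =>
          Finset.sum_congr rfl fun i _ => ?_
        rw [← helper (fun i' => A j i * (starRingEnd ℂ) (A j' i') * (if j' = j then (1:ℂ) else 0)) i]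
        exact Finset.sum_congr rfl fun i' _ => by ring
    _ = ∑ j, ∑ i, ∑ j', (A j i * (starRingEnd ℂ) (A j' i)) * (if j' = j then (1:ℂ) else 0) := by
        exact Finset.sum_congr rfl fun j _ => Finset.sum_comm
    _ = ∑ j, ∑ i, A j i * (starRingEnd ℂ) (A j i) := by
        refine Finset.sum_congr rfl fun j _ => Finset.sum_congr rfl fun i _ => ?_
        exact helper' (fun j' => A j i * (starRingEnd ℂ) (A j' i)) j

lemma collapse (A : Fin d → Fin d → ℂ) (c : ℂ) :
    ∑ j, ∑ j', ∑ i, ∑ i', (A j i * (starRingEnd ℂ) (A j' i')) *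
      (((if i = j then (1:ℂ) else 0) * (if j' = i' then 1 else 0)
        + (if i = i' then 1 else 0) * (if j' = j then 1 else 0)) * c)
    = ((∑ j, A j j) * (starRingEnd ℂ) (∑ j', A j' j')
        + ∑ j, ∑ i, A j i * (starRingEnd ℂ) (A j i)) * c := by
  have expand : ∀ j j' i i', (A j i * (starRingEnd ℂ) (A j' i')) *
      (((if i = j then (1:ℂ) else 0) * (if j' = i' then 1 else 0)
        + (if i = i' then 1 else 0) * (if j' = j then 1 else 0)) * c)
      = ((A j i * (starRingEnd ℂ) (A j' i')) *
          ((if i = j then (1:ℂ) else 0) * (if j' = i' then 1 else 0))) * c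
        + ((A j i * (starRingEnd ℂ) (A j' i')) *
          ((if i = i' then (1:ℂ) else 0) * (if j' = j then 1 else 0))) * c := by
    intro j j' i i'; ring
  simp only [expand, Finset.sum_add_distrib, ← Finset.sum_mul]
  rw [collapse1, collapse2, add_mul]

lemma inner_expand (T : Es d →ₗ[ℂ] Es d) (ψ : Es d) :
    (inner (𝕜 := ℂ) ψ (T ψ)) * (inner (𝕜 := ℂ) (T ψ) ψ)
    = ∑ j, ∑ j', ∑ i, ∑ i',
        ((T (EuclideanSpace.single i 1)) j * (starRingEnd ℂ) ((T (EuclideanSpace.single i' 1)) j'))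
          * mono i j j' i' ψ := by
  have h1 : (inner (𝕜 := ℂ) ψ (T ψ))
      = ∑ j, ∑ i, (starRingEnd ℂ) (ψ j) * (ψ i * (T (EuclideanSpace.single i 1)) j) := by
    simp only [PiLp.inner_apply, RCLike.inner_apply']
    refine Finset.sum_congr rfl fun j _ => ?_
    rw [apply_coord, Finset.mul_sum]
  have h2 : (inner (𝕜 := ℂ) (T ψ) ψ)
      = ∑ j', ∑ i', ((starRingEnd ℂ) (ψ i') * (starRingEnd ℂ) ((T (EuclideanSpace.single i' 1)) j')) * ψ j' := by
    simp only [PiLp.inner_apply, RCLike.inner_apply']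
    refine Finset.sum_congr rfl fun j' _ => ?_
    rw [apply_coord, map_sum, Finset.sum_mul]
    refine Finset.sum_congr rfl fun i' _ => ?_
    rw [map_mul]
  rw [h1, h2, Finset.sum_mul_sum]
  refine Finset.sum_congr rfl fun j _ => Finset.sum_congr rfl fun j' _ => ?_
  rw [Finset.sum_mul_sum]
  refine Finset.sum_congr rfl fun i _ => Finset.sum_congr rfl fun i' _ => ?_
  simp only [mono]
  ring

lemma integral_foursum (F : Fin d → Fin d → Fin d → Fin d → Es d → ℂ)
    (hF : ∀ j j' i i', Integrable (F j j' i i') μ) :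
    ∫ ψ, ∑ j, ∑ j', ∑ i, ∑ i', F j j' i i' ψ ∂μ
      = ∑ j, ∑ j', ∑ i, ∑ i', ∫ ψ, F j j' i i' ψ ∂μ := by
  rw [integral_finset_sum _ (fun j _ => integrable_finset_sum _ (fun j' _ =>
    integrable_finset_sum _ (fun i _ => integrable_finset_sum _ (fun i' _ => hF j j' i i'))))]
  refine Finset.sum_congr rfl fun j _ => ?_
  rw [integral_finset_sum _ (fun j' _ =>
    integrable_finset_sum _ (fun i _ => integrable_finset_sum _ (fun i' _ => hF j j' i i')))]
  refine Finset.sum_congr rfl fun j' _ => ?_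
  rw [integral_finset_sum _ (fun i _ => integrable_finset_sum _ (fun i' _ => hF j j' i i'))]
  refine Finset.sum_congr rfl fun i _ => ?_
  rw [integral_finset_sum _ (fun i' _ => hF j j' i i')]

lemma integral_term (hd : 0 < d) (hsphere : ∀ᵐ ψ ∂μ, ‖ψ‖ = 1)
    (hinv : ∀ U : Es d ≃ₗᵢ[ℂ] Es d, μ.map U = μ) (T : Es d →ₗ[ℂ] Es d) :
    ∫ ψ, (inner (𝕜 := ℂ) ψ (T ψ)) * (inner (𝕜 := ℂ) (T ψ) ψ) ∂μ
    = ((∑ j, (T (EuclideanSpace.single j 1)) j)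
          * (starRingEnd ℂ) (∑ j, (T (EuclideanSpace.single j 1)) j)
        + ∑ j, ∑ i, (T (EuclideanSpace.single i 1)) j
          * (starRingEnd ℂ) ((T (EuclideanSpace.single i 1)) j)) * ((d : ℂ)^2 + d)⁻¹ := by
  simp only [inner_expand T]
  rw [integral_foursum μ _ (fun j j' i i' => (integrable_mono μ hsphere i j j' i').const_mul _)]
  have hterm : ∀ j j' i i' : Fin d,
      (∫ ψ, ((T (EuclideanSpace.single i 1)) j * (starRingEnd ℂ) ((T (EuclideanSpace.single i' 1)) j'))
        * mono i j j' i' ψ ∂μ)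
      = ((T (EuclideanSpace.single i 1)) j * (starRingEnd ℂ) ((T (EuclideanSpace.single i' 1)) j'))
        * (((if i = j then 1 else 0) * (if j' = i' then 1 else 0)
          + (if i = i' then 1 else 0) * (if j' = j then 1 else 0) : ℂ) * ((d : ℂ)^2 + d)⁻¹) := by
    intro j j' i i'
    rw [integral_const_mul]
    congr 1
    exact keyMoment μ hd hsphere hinv i j j' i'
  simp only [hterm]
  exact collapse (fun j i => (T (EuclideanSpace.single i 1)) j) _

lemma single_norm_one (i : Fin d) :
    (inner (𝕜 := ℂ) (EuclideanSpace.single i (1:ℂ)) (EuclideanSpace.single i (1:ℂ))) = 1 := by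
  rw [EuclideanSpace.inner_single_left]
  simp [EuclideanSpace.single_apply]

lemma sum_squares {m : ℕ} (E : Fin m → (Es d →ₗ[ℂ] Es d))
    (hcomp : ∑ k, (LinearMap.adjoint (E k)) ∘ₗ E k = LinearMap.id) :
    ∑ k, ∑ j, ∑ i, ((E k) (EuclideanSpace.single i 1)) j
      * (starRingEnd ℂ) (((E k) (EuclideanSpace.single i 1)) j) = (d : ℂ) := by
  have hi : ∀ i : Fin d, ∑ k, ∑ j,
      ((E k) (EuclideanSpace.single i 1)) j * (starRingEnd ℂ) (((E k) (EuclideanSpace.single i 1)) j) = 1 := by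
    intro i
    have h0 := congrArg (fun T : Es d →ₗ[ℂ] Es d => T (EuclideanSpace.single i (1:ℂ))) hcomp
    simp only [LinearMap.sum_apply, LinearMap.comp_apply, LinearMap.id_apply] at h0
    have h1 := congrArg (fun v : Es d => (inner (𝕜 := ℂ) (EuclideanSpace.single i (1:ℂ)) v)) h0
    rw [inner_sum, single_norm_one i] at h1
    calc ∑ k, ∑ j, ((E k) (EuclideanSpace.single i 1)) j
          * (starRingEnd ℂ) (((E k) (EuclideanSpace.single i 1)) j)
        = ∑ k, (inner (𝕜 := ℂ) (EuclideanSpace.single i (1:ℂ))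
            ((LinearMap.adjoint (E k)) ((E k) (EuclideanSpace.single i 1)))) := by
          refine Finset.sum_congr rfl fun k _ => ?_
          rw [LinearMap.adjoint_inner_right]
          simp only [PiLp.inner_apply, RCLike.inner_apply]
      _ = 1 := h1
  calc ∑ k, ∑ j, ∑ i, ((E k) (EuclideanSpace.single i 1)) j
        * (starRingEnd ℂ) (((E k) (EuclideanSpace.single i 1)) j)
      = ∑ i : Fin d, ∑ k, ∑ j, ((E k) (EuclideanSpace.single i 1)) j
        * (starRingEnd ℂ) (((E k) (EuclideanSpace.single i 1)) j) := by
        rw [Finset.sum_congr rfl fun k (_ : k ∈ Finset.univ) =>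
          (Finset.sum_comm : (∑ j : Fin d, ∑ i : Fin d, ((E k) (EuclideanSpace.single i 1)) j
            * (starRingEnd ℂ) (((E k) (EuclideanSpace.single i 1)) j)) = _)]
        exact Finset.sum_comm
    _ = ∑ i : Fin d, (1 : ℂ) := Finset.sum_congr rfl fun i _ => hi i
    _ = (d : ℂ) := by simp

end AvgFidelityAux

open MeasureTheory BigOperators

theorem average_fidelity_formula
    (d m : ℕ) [MeasurableSpace (EuclideanSpace ℂ (Fin d))]
    [BorelSpace (EuclideanSpace ℂ (Fin d))]
    (μ : Measure (EuclideanSpace ℂ (Fin d))) [IsProbabilityMeasure μ]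
    -- μ is the unitarily invariant probability measure on pure states
    (hsphere : ∀ᵐ ψ ∂μ, ‖ψ‖ = 1)
    (hinv : ∀ U : EuclideanSpace ℂ (Fin d) ≃ₗᵢ[ℂ] EuclideanSpace ℂ (Fin d),
      μ.map U = μ)
    -- Kraus operators of a trace-preserving quantum operation
    (E : Fin m → (EuclideanSpace ℂ (Fin d) →ₗ[ℂ] EuclideanSpace ℂ (Fin d)))
    (hcomp : ∑ k, (LinearMap.adjoint (E k)) ∘ₗ E k = LinearMap.id) :
    ∫ ψ, ∑ k, (inner (𝕜 := ℂ) ψ ((E k) ψ)) * (inner (𝕜 := ℂ) ((E k) ψ) ψ) ∂μ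
      = (((∑ k, ‖LinearMap.trace ℂ (EuclideanSpace ℂ (Fin d)) (E k)‖ ^ 2
          + d : ℝ)) : ℂ) / ((d : ℂ) ^ 2 + d) := by
  rcases Nat.eq_zero_or_pos d with hd | hd
  · exfalso
    subst hd
    have : (MeasureTheory.ae μ).NeBot := ae_neBot.mpr (IsProbabilityMeasure.ne_zero μ)
    obtain ⟨ψ, hψ⟩ := hsphere.exists
    have hz : ψ = 0 := PiLp.ext fun i => i.elim0
    rw [hz] at hψ
    simp at hψ
  · have hint : ∀ k, Integrable (fun ψ : Es d => (inner (𝕜 := ℂ) ψ ((E k) ψ))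
        * (inner (𝕜 := ℂ) ((E k) ψ) ψ)) μ := by
      intro k
      refine Integrable.congr (f := fun ψ : Es d => ∑ j, ∑ j', ∑ i, ∑ i',
        (((E k) (EuclideanSpace.single i 1)) j
          * (starRingEnd ℂ) (((E k) (EuclideanSpace.single i' 1)) j')) * mono i j j' i' ψ)
        ?_ (ae_of_all _ fun ψ => (inner_expand (E k) ψ).symm)
      exact integrable_finset_sum _ (fun j _ => integrable_finset_sum _ (fun j' _ =>
        integrable_finset_sum _ (fun i _ => integrable_finset_sum _ (fun i' _ =>
          (integrable_mono μ hsphere i j j' i').const_mul _))))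
    rw [integral_finset_sum _ (fun k _ => hint k)]
    have hterm : ∀ k, (∫ ψ, (inner (𝕜 := ℂ) ψ ((E k) ψ)) * (inner (𝕜 := ℂ) ((E k) ψ) ψ) ∂μ)
        = ((∑ j, ((E k) (EuclideanSpace.single j 1)) j)
            * (starRingEnd ℂ) (∑ j, ((E k) (EuclideanSpace.single j 1)) j)
          + ∑ j, ∑ i, ((E k) (EuclideanSpace.single i 1)) j
            * (starRingEnd ℂ) (((E k) (EuclideanSpace.single i 1)) j)) * ((d : ℂ)^2 + d)⁻¹ :=
      fun k => integral_term μ hd hsphere hinv (E k)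
    rw [Finset.sum_congr rfl (fun k _ => hterm k), ← Finset.sum_mul, Finset.sum_add_distrib,
      sum_squares E hcomp]
    have htr : ∀ k, (∑ j, ((E k) (EuclideanSpace.single j 1)) j)
        * (starRingEnd ℂ) (∑ j, ((E k) (EuclideanSpace.single j 1)) j)
        = ((‖LinearMap.trace ℂ (EuclideanSpace ℂ (Fin d)) (E k)‖ ^ 2 : ℝ) : ℂ) := by
      intro k
      rw [← trace_eq_sum (E k), Complex.sq_norm, Complex.mul_conj]
    rw [Finset.sum_congr rfl (fun k _ => htr k)]
    rw [div_eq_mul_inv]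
    congr 1
    push_cast
    ring
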